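/- Let G be the m × n grid graph with vertex set {0,...,m-1} × {0,...,n-1} and edges between vertices at ℓ¹-distance 1. Every connected component of the subgraph induced by a perfect dominating set S in G has vertex set of the form {a,...,a+r-1} × {c,...,c+s-1} for some 1 ≤ r ≤ m and 1 ≤ s ≤ n. -/

import Mathlib

/-- The vertex set of the m × n grid: {0,...,m-1} × {0,...,n-1} inside ℤ × ℤ. -/
def gridBox (m n : ℤ) : Set (ℤ × ℤ) := Set.Icc 0 (m - 1) ×ˢ Set.Icc 0 (n - 1)

/-- The m × n grid graph, realized on vertex set ℤ × ℤ (edges only inside the box). -/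
def gridGraph (m n : ℤ) : SimpleGraph (ℤ × ℤ) where
  Adj p q := p ∈ gridBox m n ∧ q ∈ gridBox m n ∧ |p.1 - q.1| + |p.2 - q.2| = 1
  symm := ⟨fun p q ⟨hp, hq, h⟩ => by
    refine ⟨hq, hp, ?_⟩
    rw [abs_sub_comm q.1 p.1, abs_sub_comm q.2 p.2]; exact h⟩
  loopless := ⟨fun p ⟨_, _, h⟩ => by simp at h⟩

namespace Stmt3Aux

lemma mem_gridBox {m n : ℤ} {p : ℤ × ℤ} :
    p ∈ gridBox m n ↔ 0 ≤ p.1 ∧ p.1 ≤ m - 1 ∧ 0 ≤ p.2 ∧ p.2 ≤ n - 1 := by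
  simp only [gridBox, Set.mem_prod, Set.mem_Icc]
  tauto

lemma abs_succ (x : ℤ) : |x - (x + 1)| = 1 := by
  rw [show x - (x + 1) = (-1 : ℤ) by ring]; norm_num

lemma abs_succ' (x : ℤ) : |x + 1 - x| = 1 := by
  rw [show x + 1 - x = (1 : ℤ) by ring]; norm_num

/-- generic one-dimensional propagation along a filled line -/
lemma propagate (P Q : ℤ → Prop)
    (h : ∀ y, P y → P (y + 1) → Q y → Q (y + 1))
    (h' : ∀ y, P y → P (y + 1) → Q (y + 1) → Q y)
    (ylo yhi y0 : ℤ) (hP : ∀ y, ylo ≤ y → y ≤ yhi → P y)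
    (h0 : ylo ≤ y0) (h0' : y0 ≤ yhi) (hQ : Q y0) :
    ∀ y, ylo ≤ y → y ≤ yhi → Q y := by
  have up : ∀ k : ℕ, y0 + k ≤ yhi → Q (y0 + k) := by
    intro k
    induction k with
    | zero => intro _; simpa using hQ
    | succ k ih =>
      intro hk
      have hcast : ((k + 1 : ℕ) : ℤ) = (k : ℤ) + 1 := by push_cast; ring
      rw [hcast] at hk ⊢
      have hk' : y0 + (k : ℤ) ≤ yhi := by omega
      have hq := h (y0 + k) (hP _ (by omega) hk') (hP _ (by omega) (by omega)) (ih hk')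
      rwa [← add_assoc]
  have down : ∀ k : ℕ, ylo ≤ y0 - k → Q (y0 - k) := by
    intro k
    induction k with
    | zero => intro _; simpa using hQ
    | succ k ih =>
      intro hk
      have hcast : ((k + 1 : ℕ) : ℤ) = (k : ℤ) + 1 := by push_cast; ring
      rw [hcast] at hk ⊢
      have hk' : ylo ≤ y0 - (k : ℤ) := by omega
      have e : y0 - ((k : ℤ) + 1) + 1 = y0 - k := by ring
      have hq := h' (y0 - ((k : ℤ) + 1)) (hP _ (by omega) (by omega))
        (by rw [e]; exact hP _ (by omega) (by omega)) (by rw [e]; exact ih hk')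
      exact hq
  intro y hy hy'
  rcases le_total y0 y with hle | hle
  · have := up (y - y0).toNat (by omega)
    rwa [show y0 + ((y - y0).toNat : ℤ) = y by omega] at this
  · have := down (y0 - y).toNat (by omega)
    rwa [show y0 - ((y0 - y).toNat : ℤ) = y by omega] at this

/-- A finite nonempty grid-connected subset of ℤ² closed under completing
unit squares is a rectangle. -/
lemma rect (D : Set (ℤ × ℤ)) (hfin : D.Finite) (hne : D.Nonempty)
    (hconn : ∀ p ∈ D, ∀ q ∈ D, Relation.ReflTransGen
      (fun p q => p ∈ D ∧ q ∈ D ∧ |p.1 - q.1| + |p.2 - q.2| = 1) p q)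
    (hcorner : ∀ x x' y y' : ℤ, |x - x'| = 1 → |y - y'| = 1 →
      (x, y) ∈ D → (x', y) ∈ D → (x, y') ∈ D → (x', y') ∈ D) :
    ∃ a b c d : ℤ, a ≤ b ∧ c ≤ d ∧ D = Set.Icc a b ×ˢ Set.Icc c d := by
  have hbox : ∀ p ∈ D, ∀ q : ℤ × ℤ, Relation.ReflTransGen
      (fun p q => p ∈ D ∧ q ∈ D ∧ |p.1 - q.1| + |p.2 - q.2| = 1) p q →
      ∀ w : ℤ × ℤ, min p.1 q.1 ≤ w.1 → w.1 ≤ max p.1 q.1 →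
        min p.2 q.2 ≤ w.2 → w.2 ≤ max p.2 q.2 → w ∈ D := by
    intro p hp q hrtg
    induction hrtg with
    | refl =>
      intro w h1 h2 h3 h4
      have : w = p := Prod.ext (by omega) (by omega)
      rwa [this]
    | @tail b c hpb hbc ih =>
      obtain ⟨hbD, hcD, hdist⟩ := hbc
      rw [Int.abs_eq_natAbs, Int.abs_eq_natAbs] at hdist
      have habs1 : |b.1 - c.1| = ((b.1 - c.1).natAbs : ℤ) := Int.abs_eq_natAbs _
      have habs2 : |b.2 - c.2| = ((b.2 - c.2).natAbs : ℤ) := Int.abs_eq_natAbs _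
      intro w h1 h2 h3 h4
      rcases (by omega : (b.1 = c.1 ∧ (b.2 - c.2).natAbs = 1) ∨
          (b.2 = c.2 ∧ (b.1 - c.1).natAbs = 1)) with ⟨hbc1, hbc2⟩ | ⟨hbc1, hbc2⟩
      · -- vertical step: y coordinate changed
        have habsy : |b.2 - c.2| = 1 := by rw [habs2, hbc2]; norm_num
        by_cases hw2 : min p.2 b.2 ≤ w.2 ∧ w.2 ≤ max p.2 b.2
        · exact ih w (by omega) (by omega) hw2.1 hw2.2
        · have hwc : w.2 = c.2 := by omega
          have hQ := propagate (fun x => (x, b.2) ∈ D) (fun x => (x, c.2) ∈ D)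
            (fun x hx hx1 hq => hcorner x (x + 1) b.2 c.2 (abs_succ x) habsy hx hx1 hq)
            (fun x hx hx1 hq => hcorner (x + 1) x b.2 c.2 (abs_succ' x) habsy hx1 hx hq)
            (min p.1 b.1) (max p.1 b.1) b.1
            (fun x hx hx' => ih (x, b.2) hx hx' (by omega) (by omega))
            (by omega) (by omega)
            (by show ((b.1, c.2) : ℤ × ℤ) ∈ D; rw [hbc1, Prod.mk.eta]; exact hcD)
          have h5 : ((w.1, c.2) : ℤ × ℤ) ∈ D := hQ w.1 (by omega) (by omega)
          rwa [show ((w.1, c.2) : ℤ × ℤ) = w from Prod.ext rfl hwc.symm] at h5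
      · -- horizontal step: x coordinate changed
        have habsx : |b.1 - c.1| = 1 := by rw [habs1, hbc2]; norm_num
        by_cases hw1 : min p.1 b.1 ≤ w.1 ∧ w.1 ≤ max p.1 b.1
        · exact ih w hw1.1 hw1.2 (by omega) (by omega)
        · have hwc : w.1 = c.1 := by omega
          have hQ := propagate (fun y => (b.1, y) ∈ D) (fun y => (c.1, y) ∈ D)
            (fun y hy hy1 hq => hcorner b.1 c.1 y (y + 1) habsx (abs_succ y) hy hq hy1)
            (fun y hy hy1 hq => hcorner b.1 c.1 (y + 1) y habsx (abs_succ' y) hy1 hq hy)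
            (min p.2 b.2) (max p.2 b.2) b.2
            (fun y hy hy' => ih (b.1, y) (by omega) (by omega) hy hy')
            (by omega) (by omega)
            (by show ((c.1, b.2) : ℤ × ℤ) ∈ D; rw [hbc1, Prod.mk.eta]; exact hcD)
          have h5 : ((c.1, w.2) : ℤ × ℤ) ∈ D := hQ w.2 (by omega) (by omega)
          rwa [show ((c.1, w.2) : ℤ × ℤ) = w from Prod.ext hwc.symm rfl] at h5
  obtain ⟨pa, hpa, hpamin⟩ := Set.exists_min_image D Prod.fst hfin hne
  obtain ⟨pb, hpb, hpbmax⟩ := Set.exists_max_image D Prod.fst hfin hne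
  obtain ⟨pc, hpc, hpcmin⟩ := Set.exists_min_image D Prod.snd hfin hne
  obtain ⟨pd, hpd, hpdmax⟩ := Set.exists_max_image D Prod.snd hfin hne
  refine ⟨pa.1, pb.1, pc.2, pd.2, hpamin pb hpb, hpcmin pd hpd, ?_⟩
  ext w
  simp only [Set.mem_prod, Set.mem_Icc]
  constructor
  · intro hw
    exact ⟨⟨hpamin w hw, hpbmax w hw⟩, hpcmin w hw, hpdmax w hw⟩
  · rintro ⟨⟨hx1, hx2⟩, hy1, hy2⟩
    have hab : pa.1 ≤ pb.1 := hpamin pb hpb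
    have h1 : ((w.1, pa.2) : ℤ × ℤ) ∈ D :=
      hbox pa hpa pb (hconn pa hpa pb hpb) (w.1, pa.2) (by dsimp only; omega)
        (by dsimp only; omega) (by dsimp only; omega) (by dsimp only; omega)
    have h2 : ((pc.1, w.2) : ℤ × ℤ) ∈ D :=
      hbox pc hpc pd (hconn pc hpc pd hpd) (pc.1, w.2) (by dsimp only; omega)
        (by dsimp only; omega) (by dsimp only; omega) (by dsimp only; omega)
    have h3 := hbox (w.1, pa.2) h1 (pc.1, w.2) (hconn _ h1 _ h2) w (by dsimp only; omega)
      (by dsimp only; omega) (by dsimp only; omega) (by dsimp only; omega)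
    exact h3

end Stmt3Aux

open Stmt3Aux in
/-- Every connected component of the subgraph of the m × n grid graph induced by a
perfect dominating set `S` has vertex set `{a,...,a+r-1} × {c,...,c+s-1}` with
`1 ≤ r ≤ m` and `1 ≤ s ≤ n`. -/
theorem stmt_3 (m n : ℤ) (hm : 1 ≤ m) (hn : 1 ≤ n) (S : Set (ℤ × ℤ))
    (hS : S ⊆ gridBox m n)
    (hPDS : ∀ v ∈ gridBox m n, v ∉ S → ∃! u, u ∈ S ∧ (gridGraph m n).Adj v u)
    (v : ℤ × ℤ) (hv : v ∈ S) :
    ∃ a c r s : ℤ, 1 ≤ r ∧ r ≤ m ∧ 1 ≤ s ∧ s ≤ n ∧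
      {w : ℤ × ℤ | ∃ hw : w ∈ S, ((gridGraph m n).induce S).Reachable ⟨v, hv⟩ ⟨w, hw⟩}
        = Set.Icc a (a + r - 1) ×ˢ Set.Icc c (c + s - 1) := by
  classical
  set step : ℤ × ℤ → ℤ × ℤ → Prop :=
    fun p q => p ∈ S ∧ q ∈ S ∧ (gridGraph m n).Adj p q with hstep
  set D : Set (ℤ × ℤ) := {w | Relation.ReflTransGen step v w} with hD
  have hvD : v ∈ D := Relation.ReflTransGen.refl
  have hDS : D ⊆ S := by
    intro w hw
    rcases (Relation.ReflTransGen.cases_tail hw) with h | ⟨c, _, hc⟩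
    · rwa [h]
    · exact hc.2.1
  have hgrow : ∀ b ∈ D, ∀ c, step b c → c ∈ D :=
    fun b hb c hbc => Relation.ReflTransGen.tail hb hbc
  -- the set in the statement equals D
  have hset : {w : ℤ × ℤ | ∃ hw : w ∈ S,
      ((gridGraph m n).induce S).Reachable ⟨v, hv⟩ ⟨w, hw⟩} = D := by
    ext w
    simp only [Set.mem_setOf_eq]
    constructor
    · rintro ⟨hw, hr⟩
      rw [SimpleGraph.reachable_iff_reflTransGen] at hr
      have := Relation.ReflTransGen.lift (p := step) (Subtype.val : S → ℤ × ℤ)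
        (fun a b hab => show step a.1 b.1 from ⟨a.2, b.2, hab⟩) _ _ hr
      exact this
    · intro hw
      have : ∀ w, Relation.ReflTransGen step v w →
          ∃ hw : w ∈ S, ((gridGraph m n).induce S).Reachable ⟨v, hv⟩ ⟨w, hw⟩ := by
        intro w hw
        induction hw with
        | refl => exact ⟨hv, SimpleGraph.Reachable.refl _⟩
        | @tail b c hvb hbc ih =>
          obtain ⟨hb, hreach⟩ := ih
          refine ⟨hbc.2.1, hreach.trans (SimpleGraph.Adj.reachable ?_)⟩
          exact hbc.2.2
      exact this w hw
  -- connectivity of D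
  have hstepsym : Symmetric step := by
    rintro p q ⟨hp, hq, hadj⟩
    exact ⟨hq, hp, hadj.symm⟩
  have hDconn : ∀ p ∈ D, ∀ q ∈ D, Relation.ReflTransGen
      (fun p q => p ∈ D ∧ q ∈ D ∧ |p.1 - q.1| + |p.2 - q.2| = 1) p q := by
    have key : ∀ q, Relation.ReflTransGen step v q → Relation.ReflTransGen
        (fun p q => p ∈ D ∧ q ∈ D ∧ |p.1 - q.1| + |p.2 - q.2| = 1) v q := by
      intro q hq
      induction hq with
      | refl => exact Relation.ReflTransGen.refl
      | @tail b c hvb hbc ih =>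
        have hbD : b ∈ D := hvb
        have hcD : c ∈ D := Relation.ReflTransGen.tail hvb hbc
        exact Relation.ReflTransGen.tail ih ⟨hbD, hcD, hbc.2.2.2.2⟩
    intro p hp q hq
    have hsym2 : Symmetric (fun p q : ℤ × ℤ =>
        p ∈ D ∧ q ∈ D ∧ |p.1 - q.1| + |p.2 - q.2| = 1) := by
      rintro p q ⟨hp, hq, h⟩
      refine ⟨hq, hp, ?_⟩
      rw [abs_sub_comm q.1 p.1, abs_sub_comm q.2 p.2]; exact h
    exact Relation.ReflTransGen.trans
      (haveI : Std.Symm (fun p q : ℤ × ℤ =>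
          p ∈ D ∧ q ∈ D ∧ |p.1 - q.1| + |p.2 - q.2| = 1) := Std.Symm.mk (fun _ _ h => hsym2 h);
        Std.Symm.symm _ _ (key p hp)) (key q hq)
  -- corner closure of D
  have hDbox : D ⊆ gridBox m n := fun w hw => hS (hDS hw)
  have hcorner : ∀ x x' y y' : ℤ, |x - x'| = 1 → |y - y'| = 1 →
      (x, y) ∈ D → (x', y) ∈ D → (x, y') ∈ D → (x', y') ∈ D := by
    intro x x' y y' hxx hyy h1 h2 h3
    have hb2 := mem_gridBox.1 (hDbox h2)
    have hb3 := mem_gridBox.1 (hDbox h3)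
    have hbf : ((x', y') : ℤ × ℤ) ∈ gridBox m n := by
      rw [mem_gridBox]
      exact ⟨hb2.1, hb2.2.1, hb3.2.2.1, hb3.2.2.2⟩
    have hadj1 : (gridGraph m n).Adj (x', y') (x', y) := by
      refine ⟨hbf, hDbox h2, ?_⟩
      simp only []
      rw [abs_sub_comm y' y]
      simpa using hyy
    have hadj2 : (gridGraph m n).Adj (x', y') (x, y') := by
      refine ⟨hbf, hDbox h3, ?_⟩
      simp only []
      rw [abs_sub_comm x' x]
      simpa using hxx
    by_cases hfS : ((x', y') : ℤ × ℤ) ∈ S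
    · exact hgrow _ h2 _ ⟨hDS h2, hfS, hadj1.symm⟩
    · exfalso
      obtain ⟨u, hu, huniq⟩ := hPDS (x', y') hbf hfS
      have e1 := huniq (x', y) ⟨hDS h2, hadj1⟩
      have e2 := huniq (x, y') ⟨hDS h3, hadj2⟩
      have : x' = x := by
        have := e1.trans e2.symm
        exact (Prod.mk.injEq _ _ _ _ ▸ this).1
      rw [this] at hxx
      simp at hxx
  -- finiteness
  have hfin : D.Finite := Set.Finite.subset
    ((Set.finite_Icc (0 : ℤ) (m - 1)).prod (Set.finite_Icc (0 : ℤ) (n - 1))) hDbox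
  obtain ⟨a, b, c, d, hab, hcd, hDeq⟩ := rect D hfin ⟨v, hvD⟩ hDconn hcorner
  have haBox : (0 : ℤ) ≤ a ∧ b ≤ m - 1 ∧ 0 ≤ c ∧ d ≤ n - 1 := by
    have h1 : ((a, c) : ℤ × ℤ) ∈ D := by
      rw [hDeq]; simp [Set.mem_Icc]; omega
    have h2 : ((b, d) : ℤ × ℤ) ∈ D := by
      rw [hDeq]; simp [Set.mem_Icc]; omega
    have hm1 := mem_gridBox.1 (hDbox h1)
    have hm2 := mem_gridBox.1 (hDbox h2)
    exact ⟨hm1.1, hm2.2.1, hm1.2.2.1, hm2.2.2.2⟩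
  refine ⟨a, c, b - a + 1, d - c + 1, by omega, by omega, by omega, by omega, ?_⟩
  have e1 : a + (b - a + 1) - 1 = b := by ring
  have e2 : c + (d - c + 1) - 1 = d := by ring
  rw [hset, hDeq, e1, e2]
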